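/- Let A be an abelian category with enough injectives and let (W, F) be an injective cotorsion pair. Then every object of finite injective dimension lies in W, i.e. if M admits an exact sequence 0 → M → I⁰ → I¹ → ⋯ → Iⁿ → 0 with every Iᵏ injective, then M ∈ W. If moreover A has enough projectives, then every object of finite projective dimension also lies in W. -/
import Mathlib


open CategoryTheory CategoryTheory.Limits

universe w v u

variable {A : Type u} [Category.{v} A] [Abelian A]

/-- `IsShortExact i p` asserts that `0 → X → Y → Z → 0` is a short exact sequence. -/
def IsShortExact {X Y Z : A} (i : X ⟶ Y) (p : Y ⟶ Z) : Prop :=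
  ∃ w : i ≫ p = 0, (ShortComplex.mk i p w).ShortExact

section Ext

variable [HasExt.{w} A]

/-- `Ext¹(X, Y) = 0`. -/
def Ext1Zero (X Y : A) : Prop := Subsingleton (Abelian.Ext X Y 1)

/-- `(F, C)` is a cotorsion pair: each class is the `Ext¹`-orthogonal of the other. -/
def IsCotorsionPair (F C : Set A) : Prop :=
  (∀ X : A, X ∈ F ↔ ∀ Y ∈ C, Ext1Zero.{w} X Y) ∧
  (∀ Y : A, Y ∈ C ↔ ∀ X ∈ F, Ext1Zero.{w} X Y)

/-- A complete cotorsion pair: for every object `X` there are short exact sequences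
`0 → C → F → X → 0` and `0 → X → C' → F' → 0` with `F, F'` in the left class and
`C, C'` in the right class. -/
def IsCompleteCotorsionPair (F C : Set A) : Prop :=
  IsCotorsionPair.{w} F C ∧
  (∀ X : A, ∃ (Co Fo : A) (i : Co ⟶ Fo) (p : Fo ⟶ X),
    Co ∈ C ∧ Fo ∈ F ∧ IsShortExact i p) ∧
  (∀ X : A, ∃ (Co Fo : A) (i : X ⟶ Co) (p : Co ⟶ Fo),
    Co ∈ C ∧ Fo ∈ F ∧ IsShortExact i p)

end Ext

/-- A thick class: closed under direct summands (retracts) and satisfying two-out-of-three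
for short exact sequences. -/
def IsThickClass (W : Set A) : Prop :=
  (∀ (X Y : A) (s : Y ⟶ X) (r : X ⟶ Y), s ≫ r = 𝟙 Y → X ∈ W → Y ∈ W) ∧
  (∀ ⦃X Y Z : A⦄ (i : X ⟶ Y) (p : Y ⟶ Z), IsShortExact i p →
    (X ∈ W → Y ∈ W → Z ∈ W) ∧ (X ∈ W → Z ∈ W → Y ∈ W) ∧ (Y ∈ W → Z ∈ W → X ∈ W))

/-- The class `F` is closed under kernels of epimorphisms between objects of `F`. -/
def ClosedUnderKernelsOfEpis (F : Set A) : Prop :=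
  ∀ ⦃X Y Z : A⦄ (i : X ⟶ Y) (p : Y ⟶ Z), IsShortExact i p → Y ∈ F → Z ∈ F → X ∈ F

/-- The class `C` is closed under cokernels of monomorphisms between objects of `C`. -/
def ClosedUnderCokernelsOfMonos (C : Set A) : Prop :=
  ∀ ⦃X Y Z : A⦄ (i : X ⟶ Y) (p : Y ⟶ Z), IsShortExact i p → X ∈ C → Y ∈ C → Z ∈ C

/-- An injective cotorsion pair: a complete cotorsion pair `(W, F)` with `W` thick and
`W ∩ F` equal to the class of injective objects. -/
def IsInjectiveCotorsionPair [HasExt.{w} A] (W F : Set A) : Prop :=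
  IsCompleteCotorsionPair.{w} W F ∧ IsThickClass W ∧
  ∀ X : A, (X ∈ W ∧ X ∈ F) ↔ Injective X

/-- A projective cotorsion pair: a complete cotorsion pair `(C, W)` with `W` thick and
`C ∩ W` equal to the class of projective objects. -/
def IsProjectiveCotorsionPair [HasExt.{w} A] (C W : Set A) : Prop :=
  IsCompleteCotorsionPair.{w} C W ∧ IsThickClass W ∧
  ∀ X : A, (X ∈ C ∧ X ∈ W) ↔ Projective X

/-- A Hovey triple `(Q, W, R)`: `W` is thick and both `(Q, W ∩ R)` and `(Q ∩ W, R)` are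
complete cotorsion pairs. -/
def IsHoveyTriple [HasExt.{w} A] (Q W R : Set A) : Prop :=
  IsThickClass W ∧ IsCompleteCotorsionPair.{w} Q (W ∩ R) ∧
    IsCompleteCotorsionPair.{w} (Q ∩ W) R

/-- `M` admits an exact sequence `0 → M → I⁰ → I¹ → ⋯ → Iⁿ → 0` with each `Iᵏ` injective. -/
def HasFiniteInjectiveDimension (M : A) : Prop :=
  ∃ (n : ℕ) (J : CochainComplex A ℕ) (ι : M ⟶ J.X 0),
    (∀ k ≤ n, Injective (J.X k)) ∧ (∀ k, n < k → IsZero (J.X k)) ∧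
    Mono ι ∧ (∃ w : ι ≫ J.d 0 1 = 0, (ShortComplex.mk ι (J.d 0 1) w).Exact) ∧
    (∀ k : ℕ, (ShortComplex.mk (J.d k (k + 1)) (J.d (k + 1) (k + 2)) (J.d_comp_d _ _ _)).Exact)

/-- `M` admits an exact sequence `0 → Pⁿ → ⋯ → P¹ → P⁰ → M → 0` with each `Pᵏ` projective. -/
def HasFiniteProjectiveDimension (M : A) : Prop :=
  ∃ (n : ℕ) (P : ChainComplex A ℕ) (π : P.X 0 ⟶ M),
    (∀ k ≤ n, Projective (P.X k)) ∧ (∀ k, n < k → IsZero (P.X k)) ∧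
    Epi π ∧ (∃ w : P.d 1 0 ≫ π = 0, (ShortComplex.mk (P.d 1 0) π w).Exact) ∧
    (∀ k : ℕ, (ShortComplex.mk (P.d (k + 2) (k + 1)) (P.d (k + 1) k) (P.d_comp_d _ _ _)).Exact)


section Helpers

lemma isShortExact_kernelLift {X Y Z W' : A} (f : X ⟶ Y) (g : Y ⟶ Z) (h : Z ⟶ W')
    (wfg : f ≫ g = 0) (wgh : g ≫ h = 0) [Mono f]
    (hfg : (ShortComplex.mk f g wfg).Exact) (hgh : (ShortComplex.mk g h wgh).Exact) :
    IsShortExact f (kernel.lift h g wgh) := by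
  have wL : f ≫ kernel.lift h g wgh = 0 := by
    rw [← cancel_mono (kernel.ι h)]
    simp [wfg]
  have hepi : Epi (kernel.lift h g wgh) :=
    (ShortComplex.exact_iff_epi_kernel_lift (ShortComplex.mk g h wgh)).1 hgh
  have hker : IsLimit (KernelFork.ofι f wfg) := hfg.fIsKernel
  have hlim : IsLimit (KernelFork.ofι f wL) :=
    KernelFork.IsLimit.ofι' f wL (fun {T} k hk => by
      refine ⟨hker.lift (KernelFork.ofι k ?_), ?_⟩
      · have : k ≫ kernel.lift h g wgh ≫ kernel.ι h = 0 := by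
          rw [← Category.assoc, hk, zero_comp]
        simpa using this
      · exact Fork.IsLimit.lift_ι hker)
  exact ⟨wL, { exact := ShortComplex.exact_of_f_is_kernel _ hlim,
               mono_f := ‹Mono f›, epi_g := hepi }⟩

lemma isShortExact_cokernelDesc {V X Y Z : A} (e : V ⟶ X) (f : X ⟶ Y) (g : Y ⟶ Z)
    (wef : e ≫ f = 0) (wfg : f ≫ g = 0) [Epi g]
    (hef : (ShortComplex.mk e f wef).Exact) (hfg : (ShortComplex.mk f g wfg).Exact) :
    IsShortExact (cokernel.desc e f wef) g := by
  have wL : cokernel.desc e f wef ≫ g = 0 := by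
    rw [← cancel_epi (cokernel.π e)]
    simp [wfg]
  have hmono : Mono (cokernel.desc e f wef) :=
    (ShortComplex.exact_iff_mono_cokernel_desc (ShortComplex.mk e f wef)).1 hef
  have hcoker : IsColimit (CokernelCofork.ofπ g wfg) := hfg.gIsCokernel
  have hcolim : IsColimit (CokernelCofork.ofπ g wL) :=
    CokernelCofork.IsColimit.ofπ' g wL (fun {T} k hk => by
      refine ⟨hcoker.desc (CokernelCofork.ofπ k ?_), ?_⟩
      · have : (cokernel.π e ≫ cokernel.desc e f wef) ≫ k = 0 := by
          rw [Category.assoc, hk, comp_zero]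
        simpa using this
      · exact Cofork.IsColimit.π_desc hcoker)
  exact ⟨wL, { exact := ShortComplex.exact_of_g_is_cokernel _ hcolim,
               mono_f := hmono, epi_g := ‹Epi g› }⟩

end Helpers

theorem finite_dimension_objects_are_trivial [EnoughInjectives A] [HasExt.{w} A]
    (W F : Set A) (h : IsInjectiveCotorsionPair.{w} W F) :
    (∀ M : A, HasFiniteInjectiveDimension M → M ∈ W) ∧
    (EnoughProjectives A → ∀ M : A, HasFiniteProjectiveDimension M → M ∈ W) := by
  
  obtain ⟨hcomp, hthick, hiff⟩ := h
  -- injective objects are in W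
  have hinjW : ∀ X : A, Injective X → X ∈ W := fun X hX => ((hiff X).2 hX).1
  -- retract closure and two-of-three
  obtain ⟨hretract, h23⟩ := hthick
  -- an object that is zero is in W (retract of any injective via zero maps... use completeness)
  have hzeroW : ∀ X : A, IsZero X → X ∈ W := by
    intro X hX
    obtain ⟨Co, Fo, i, p, _, hFoW, hse⟩ := hcomp.2.1 X
    refine hretract Fo X (0 : X ⟶ Fo) (0 : Fo ⟶ X) ?_ hFoW
    rw [zero_comp]
    exact (hX.eq_of_src _ _).symm
  constructor
  · rintro M ⟨n, J, ι, hinj, hz, hmono, ⟨w01, hex0⟩, hexact⟩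
    -- syzygies
    set K : ℕ → A := fun k => kernel (J.d k (k + 1)) with hK
    have hses : ∀ k : ℕ, IsShortExact (kernel.ι (J.d k (k + 1)))
        (kernel.lift (J.d (k + 1) (k + 2)) (J.d k (k + 1)) (J.d_comp_d _ _ _)) := by
      intro k
      exact isShortExact_kernelLift _ _ _ (kernel.condition _) (J.d_comp_d _ _ _)
        (ShortComplex.exact_of_f_is_kernel _ (kernelIsKernel _)) (hexact k)
    have hKW : ∀ d k : ℕ, k + d = n + 1 → K k ∈ W := by
      intro d
      induction d with
      | zero =>
        intro k hk
        obtain rfl : k = n + 1 := by omega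
        refine hzeroW _ ?_
        have hzt : IsZero (J.X (n + 1)) := hz _ (Nat.lt_succ_self n)
        rw [IsZero.iff_id_eq_zero]
        rw [← cancel_mono (kernel.ι (J.d (n + 1) (n + 2)))]
        rw [Category.id_comp, zero_comp]
        exact hzt.eq_of_tgt _ _
      | succ d ih =>
        intro k hk
        have hXkW : J.X k ∈ W := hinjW _ (hinj k (by omega))
        have hK1W : K (k + 1) ∈ W := ih (k + 1) (by omega)
        exact ((h23 _ _ (hses k)).2.2) hXkW hK1W
    have hK1W : K 1 ∈ W := hKW n 1 (by omega)
    have hX0W : J.X 0 ∈ W := hinjW _ (hinj 0 (Nat.zero_le n))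
    have hsesM : IsShortExact ι
        (kernel.lift (J.d 1 2) (J.d 0 1) (J.d_comp_d _ _ _)) :=
      isShortExact_kernelLift ι (J.d 0 1) (J.d 1 2) w01 (J.d_comp_d _ _ _) hex0 (hexact 0)
    exact ((h23 _ _ hsesM).2.2) hX0W hK1W
  · intro _ M hM
    obtain ⟨n, P, π, hproj, hz, hepi, ⟨w10, hex0⟩, hexact⟩ := hM
    -- projective objects are in W (retracts of objects of W by completeness)
    have hprojW : ∀ X : A, Projective X → X ∈ W := by
      intro X hX
      obtain ⟨Co, Fo, i, p, _, hFoW, hse⟩ := hcomp.2.1 X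
      obtain ⟨wip, hsec⟩ := hse
      have : Epi p := hsec.epi_g
      exact hretract Fo X (Projective.factorThru (𝟙 X) p) p
        (Projective.factorThru_comp _ _) hFoW
    set C : ℕ → A := fun k => cokernel (P.d (k + 1) k) with hC
    have hses : ∀ k : ℕ, IsShortExact
        (cokernel.desc (P.d (k + 2) (k + 1)) (P.d (k + 1) k) (P.d_comp_d _ _ _))
        (cokernel.π (P.d (k + 1) k)) := by
      intro k
      exact isShortExact_cokernelDesc _ _ _ (P.d_comp_d _ _ _) (cokernel.condition _)
        (hexact k) (ShortComplex.exact_of_g_is_cokernel _ (cokernelIsCokernel _))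
    have hCW : ∀ d k : ℕ, k + d = n + 1 → C k ∈ W := by
      intro d
      induction d with
      | zero =>
        intro k hk
        obtain rfl : k = n + 1 := by omega
        refine hzeroW _ ?_
        have hzt : IsZero (P.X (n + 1)) := hz _ (Nat.lt_succ_self n)
        rw [IsZero.iff_id_eq_zero]
        rw [← cancel_epi (cokernel.π (P.d (n + 2) (n + 1)))]
        rw [Category.comp_id, comp_zero]
        exact hzt.eq_of_src _ _
      | succ d ih =>
        intro k hk
        have hXkW : P.X k ∈ W := hprojW _ (hproj k (by omega))
        have hC1W : C (k + 1) ∈ W := ih (k + 1) (by omega)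
        exact ((h23 _ _ (hses k)).1) hC1W hXkW
    have hC1W : C 1 ∈ W := hCW n 1 (by omega)
    have hX0W : P.X 0 ∈ W := hprojW _ (hproj 0 (Nat.zero_le n))
    have hsesM : IsShortExact (cokernel.desc (P.d 2 1) (P.d 1 0) (P.d_comp_d _ _ _)) π := by
      have : Epi π := hepi
      exact isShortExact_cokernelDesc (P.d 2 1) (P.d 1 0) π (P.d_comp_d _ _ _) w10
        (hexact 0) hex0
    exact ((h23 _ _ hsesM).1) hC1W hX0W
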